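/- (Future residuals as instruments.) Under Assumption 4 with parameter k, for all integers t, t'' with t'' ≥ t + k, if cov(w_{t−1}, w_{t''}) ≠ 0, then cov(w_t − w_{t−1}, w_{t''}) / cov(w_{t−1}, w_{t''}) = (μ_t − μ_{t−1}) / μ_{t−1} + (μ_t / μ_{t−1}) · Var(θ_t − θ_{t−1}) / Var(θ_{t−1}); in particular μ_{t−1} ≠ 0 and Var(θ_{t−1}) ≠ 0. -/

import Mathlib

open MeasureTheory ProbabilityTheory

/-- Covariance of two real-valued random variables under measure `P`. -/
noncomputable def cov {Ω : Type*} [MeasurableSpace Ω] (P : Measure Ω) (X Y : Ω → ℝ) : ℝ :=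
  ∫ ω, (X ω - ∫ a, X a ∂P) * (Y ω - ∫ a, Y a ∂P) ∂P

/-- Variance of a real-valued random variable under measure `P`. -/
noncomputable def Var {Ω : Type*} [MeasurableSpace Ω] (P : Measure Ω) (X : Ω → ℝ) : ℝ :=
  cov P X X

section CovLemmas

variable {Ω : Type*} [MeasurableSpace Ω] (P : Measure Ω) [IsProbabilityMeasure P]
  {X Y Z : Ω → ℝ}

lemma memLp_centered (hX : MemLp X 2 P) :
    MemLp (fun ω => X ω - ∫ a, X a ∂P) 2 P :=
  hX.sub (memLp_const _)

lemma integrable_centered_mul (hX : MemLp X 2 P) (hY : MemLp Y 2 P) :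
    Integrable (fun ω => (X ω - ∫ a, X a ∂P) * (Y ω - ∫ a, Y a ∂P)) P := by
  have h := (memLp_centered P hY).smul (memLp_centered P hX)
    (p := 2) (q := 2) (r := 1)
  have h1 : MemLp (fun ω => (X ω - ∫ a, X a ∂P) * (Y ω - ∫ a, Y a ∂P)) 1 P := by
    simpa [Pi.smul_apply, smul_eq_mul, Pi.mul_def] using h
  exact h1.integrable le_rfl

lemma cov_symm : cov P X Y = cov P Y X := by
  unfold cov; simp_rw [mul_comm]

lemma cov_add_left (hX : MemLp X 2 P) (hY : MemLp Y 2 P) (hZ : MemLp Z 2 P) :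
    cov P (fun ω => X ω + Y ω) Z = cov P X Z + cov P Y Z := by
  unfold cov
  have hint : (∫ a, (X a + Y a) ∂P) = (∫ a, X a ∂P) + ∫ a, Y a ∂P :=
    integral_add (hX.integrable one_le_two) (hY.integrable one_le_two)
  rw [← integral_add (integrable_centered_mul P hX hZ) (integrable_centered_mul P hY hZ)]
  apply integral_congr_ae
  filter_upwards with ω
  rw [hint]; ring

lemma cov_smul_left (c : ℝ) (hX : MemLp X 2 P) :
    cov P (fun ω => c * X ω) Z = c * cov P X Z := by
  unfold cov
  have hint : (∫ a, c * X a ∂P) = c * ∫ a, X a ∂P :=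
    integral_const_mul c X
  rw [← integral_const_mul]
  apply integral_congr_ae
  filter_upwards with ω
  rw [hint]; ring

lemma cov_add_right (hX : MemLp X 2 P) (hY : MemLp Y 2 P) (hZ : MemLp Z 2 P) :
    cov P Z (fun ω => X ω + Y ω) = cov P Z X + cov P Z Y := by
  rw [cov_symm P, cov_add_left P hX hY hZ, cov_symm P (X := X), cov_symm P (X := Y)]

lemma cov_smul_right (c : ℝ) (hX : MemLp X 2 P) :
    cov P Z (fun ω => c * X ω) = c * cov P Z X := by
  rw [cov_symm P, cov_smul_left P c hX, cov_symm P (X := X)]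

lemma cov_neg_left (hX : MemLp X 2 P) :
    cov P (fun ω => -X ω) Z = -cov P X Z := by
  have := cov_smul_left P (Z := Z) (-1) hX
  simpa using this

lemma cov_sub_left (hX : MemLp X 2 P) (hY : MemLp Y 2 P) (hZ : MemLp Z 2 P) :
    cov P (fun ω => X ω - Y ω) Z = cov P X Z - cov P Y Z := by
  have h1 : cov P (fun ω => X ω + (-Y ω)) Z = cov P X Z + cov P (fun ω => -Y ω) Z :=
    cov_add_left P hX (hY.neg) hZ
  rw [cov_neg_left P hY] at h1
  simpa [sub_eq_add_neg] using h1

end CovLemmas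

/-- Future residuals as instruments: under Assumption 4, for `t'' ≥ t + k`, the IV estimand
using a future residual as instrument equals the return growth plus a bias term
`(μ t / μ (t−1)) * Var (Δθ t) / Var (θ (t−1))`. -/
theorem IV_future_instruments_bias
    {Ω : Type*} [MeasurableSpace Ω] (P : Measure Ω) [IsProbabilityMeasure P]
    (θ ε : ℤ → Ω → ℝ) (μ : ℤ → ℝ) (w : ℤ → Ω → ℝ)
    (hθ : ∀ t, MemLp (θ t) 2 P) (hε : ∀ t, MemLp (ε t) 2 P)
    (hw : ∀ t ω, w t ω = μ t * θ t ω + ε t ω)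
    (k : ℕ) (hk : 1 ≤ k)
    (A4i : ∀ t t' : ℤ, 1 ≤ t - t' →
      cov P (fun ω => θ t ω - θ (t - 1) ω) (θ t') = 0)
    (A4ii : ∀ t t' : ℤ, cov P (θ t) (ε t') = 0)
    (A4iii : ∀ t t' : ℤ, (k : ℤ) ≤ |t - t'| → cov P (ε t) (ε t') = 0) :
    ∀ t t'' : ℤ, t + k ≤ t'' →
      cov P (w (t - 1)) (w t'') ≠ 0 →
      μ (t - 1) ≠ 0 ∧ Var P (θ (t - 1)) ≠ 0 ∧
        cov P (fun ω => w t ω - w (t - 1) ω) (w t'') / cov P (w (t - 1)) (w t'') =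
          (μ t - μ (t - 1)) / μ (t - 1) +
            (μ t / μ (t - 1)) *
              (Var P (fun ω => θ t ω - θ (t - 1) ω) / Var P (θ (t - 1))) := by
  intro t t'' htk hne
  -- ℒ2 membership of w
  have hwm : ∀ s, MemLp (w s) 2 P := by
    intro s
    have : w s = fun ω => μ s * θ s ω + ε s ω := funext (hw s)
    rw [this]
    exact ((hθ s).const_mul _).add (hε s)
  -- expansion of cov (w a) (w b)
  have hwcov : ∀ a b : ℤ, (k : ℤ) ≤ |a - b| →
      cov P (w a) (w b) = μ a * μ b * cov P (θ a) (θ b) := by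
    intro a b hab
    have ha : w a = fun ω => μ a * θ a ω + ε a ω := funext (hw a)
    have hb : w b = fun ω => μ b * θ b ω + ε b ω := funext (hw b)
    rw [ha, hb]
    have hθa : MemLp (fun ω => μ a * θ a ω) 2 P := (hθ a).const_mul _
    have hθb : MemLp (fun ω => μ b * θ b ω) 2 P := (hθ b).const_mul _
    have hZ : MemLp (fun ω => μ b * θ b ω + ε b ω) 2 P := hθb.add (hε b)
    have hεθ : cov P (ε a) (θ b) = 0 := by rw [cov_symm P]; exact A4ii b a
    rw [cov_add_left P hθa (hε a) hZ,
      cov_add_right P hθb (hε b) hθa,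
      cov_add_right P hθb (hε b) (hε a),
      cov_smul_left P (μ a) (hθ a) (Z := fun ω => μ b * θ b ω),
      cov_smul_right P (μ b) (hθ b) (Z := θ a),
      cov_smul_left P (μ a) (hθ a) (Z := ε b),
      cov_smul_right P (μ b) (hθ b) (Z := ε a),
      A4ii a b, A4iii a b hab, hεθ]
    ring
  -- telescoping: cov (θ (s+n)) (θ s) = cov (θ s) (θ s)
  have htel : ∀ (n : ℕ) (s : ℤ), cov P (θ (s + n)) (θ s) = cov P (θ s) (θ s) := by
    intro n
    induction n with
    | zero => intro s; simp
    | succ m ih =>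
      intro s
      have key : cov P (fun ω => θ (s + m + 1) ω - θ (s + m) ω) (θ s) = 0 := by
        have h := A4i (s + m + 1) s (by omega)
        have : (s + (m : ℤ) + 1) - 1 = s + m := by ring
        rw [this] at h
        exact h
      have hsplit : cov P (θ (s + m + 1)) (θ s) =
          cov P (fun ω => θ (s + m + 1) ω - θ (s + m) ω) (θ s) + cov P (θ (s + m)) (θ s) := by
        have h1 := cov_add_left P (X := fun ω => θ (s + m + 1) ω - θ (s + m) ω)
          (Y := θ (s + m)) (Z := θ s) ((hθ _).sub (hθ _)) (hθ _) (hθ _)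
        have h2 : (fun ω => (θ (s + m + 1) ω - θ (s + m) ω) + θ (s + m) ω) = θ (s + m + 1) := by
          funext ω; ring
        rw [h2] at h1
        exact h1
      have hcast : s + ((m : ℤ) + 1) = s + m + 1 := by ring
      rw [show ((m + 1 : ℕ) : ℤ) = (m : ℤ) + 1 by push_cast; ring, hcast, hsplit, key, zero_add,
        ih s]
  have hcov_level : ∀ a b : ℤ, b ≤ a → cov P (θ a) (θ b) = cov P (θ b) (θ b) := by
    intro a b hba
    have := htel (a - b).toNat b
    rwa [show b + ((a - b).toNat : ℤ) = a by omega] at this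
  -- Var θ t = Var θ (t-1) + Var Δθ t
  have hΔ : MemLp (fun ω => θ t ω - θ (t - 1) ω) 2 P := (hθ _).sub (hθ _)
  set V := cov P (θ (t - 1)) (θ (t - 1)) with hV
  set D := cov P (fun ω => θ t ω - θ (t - 1) ω) (fun ω => θ t ω - θ (t - 1) ω) with hD
  have horth : cov P (fun ω => θ t ω - θ (t - 1) ω) (θ (t - 1)) = 0 :=
    A4i t (t - 1) (by omega)
  have hVar_t : cov P (θ t) (θ t) = V + D := by
    have hdecomp : θ t = fun ω => (θ t ω - θ (t - 1) ω) + θ (t - 1) ω := by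
      funext ω; ring
    calc cov P (θ t) (θ t)
        = cov P (fun ω => (θ t ω - θ (t - 1) ω) + θ (t - 1) ω) (θ t) := by rw [← hdecomp]
      _ = cov P (fun ω => θ t ω - θ (t - 1) ω) (θ t) + cov P (θ (t - 1)) (θ t) := by
          rw [cov_add_left P hΔ (hθ _) (hθ _)]
      _ = V + D := by
          have h1 : cov P (θ (t - 1)) (θ t) = V := by
            rw [cov_symm P]
            exact hcov_level t (t - 1) (by omega)
          have h2 : cov P (fun ω => θ t ω - θ (t - 1) ω) (θ t) = D := by
            rw [cov_symm P, hD, cov_symm P (X := fun ω => θ t ω - θ (t - 1) ω)]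
            have := cov_sub_left P (X := θ t) (Y := θ (t - 1))
              (Z := fun ω => θ t ω - θ (t - 1) ω) (hθ _) (hθ _) hΔ
            rw [this]
            have h3 : cov P (θ (t - 1)) (fun ω => θ t ω - θ (t - 1) ω) = 0 := by
              rw [cov_symm P]; exact horth
            rw [h3, sub_zero]
          rw [h1, h2]; ring
  -- cov θ t θ t'' and cov θ (t-1) θ t''
  have hθtt'' : cov P (θ (t - 1)) (θ t'') = V := by
    rw [cov_symm P]; exact hcov_level t'' (t - 1) (by omega)
  have hθt2 : cov P (θ t) (θ t'') = V + D := by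
    rw [cov_symm P, hcov_level t'' t (by omega), hVar_t]
  -- cov of w's
  have habs1 : (k : ℤ) ≤ |(t - 1) - t''| := by
    rw [abs_sub_comm, abs_of_nonneg (by omega)]; omega
  have habs2 : (k : ℤ) ≤ |t - t''| := by
    rw [abs_sub_comm, abs_of_nonneg (by omega)]; omega
  have hden : cov P (w (t - 1)) (w t'') = μ (t - 1) * μ t'' * V := by
    rw [hwcov (t - 1) t'' habs1, hθtt'']
  have hnum : cov P (fun ω => w t ω - w (t - 1) ω) (w t'') =
      μ t * μ t'' * (V + D) - μ (t - 1) * μ t'' * V := by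
    rw [cov_sub_left P (hwm t) (hwm (t - 1)) (hwm t''), hwcov t t'' habs2,
      hwcov (t - 1) t'' habs1, hθt2, hθtt'']
  -- nonvanishing
  rw [hden] at hne
  have hμ1 : μ (t - 1) ≠ 0 := fun h => hne (by rw [h]; ring)
  have hμ2 : μ t'' ≠ 0 := fun h => hne (by rw [h]; ring)
  have hVne : V ≠ 0 := fun h => hne (by rw [h]; ring)
  refine ⟨hμ1, hVne, ?_⟩
  rw [hnum, hden]
  show _ = _ + _ * (D / V)
  field_simp
  ring
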